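/- Let P₁ be a noncompact locally compact Hausdorff space in which every σ-compact subset has compact closure, let P₂ be any locally compact Hausdorff space, and let K = P₁ ⊔ P₂ be their topological disjoint union. Then there is no frame in C₀(K): there exist no index set J, no family (x_j)_{j∈J} of elements of C₀(K), and no constants 0 < c₁ ≤ c₂ forming a pointwise frame, i.e., such that for every t ∈ K the family (|x_j(t)|²)_{j∈J} is summable and c₁ ≤ Σ_{j∈J} |x_j(t)|² ≤ c₂. -/

import Mathlib

open ZeroAtInfty Filter Topology Set Function

universe u

/-- Let `P₁` be a noncompact locally compact Hausdorff space in which every `σ`-compact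
subset has compact closure, `P₂` any locally compact Hausdorff space, and `K = P₁ ⊔ P₂`
their topological disjoint union. Then there is no (pointwise) frame in `C₀(K)`: there are
no index set `J`, family `(x j)` in `C₀(K)` and constants `0 < c₁ ≤ c₂` such that for every
`t ∈ K` the family `(‖x j t‖ ^ 2)` is summable with `c₁ ≤ ∑' j, ‖x j t‖ ^ 2 ≤ c₂`. -/
theorem no_frame_of_sum_with_KIV
    (P₁ : Type*) [TopologicalSpace P₁] [LocallyCompactSpace P₁] [T2Space P₁]
    (P₂ : Type*) [TopologicalSpace P₂] [LocallyCompactSpace P₂] [T2Space P₂]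
    (hnc : ¬ CompactSpace P₁)
    (hIV : ∀ s : Set P₁, IsSigmaCompact s → IsCompact (closure s)) :
    ¬ ∃ (J : Type u) (x : J → C₀(P₁ ⊕ P₂, ℂ)) (c₁ c₂ : ℝ), 0 < c₁ ∧ c₁ ≤ c₂ ∧
        ∀ t : P₁ ⊕ P₂, Summable (fun j : J => ‖x j t‖ ^ 2) ∧
          c₁ ≤ ∑' j : J, ‖x j t‖ ^ 2 ∧ (∑' j : J, ‖x j t‖ ^ 2) ≤ c₂ := by
  classical
  rintro ⟨J, x, c₁, c₂, hc₁, hc₁₂, hfr⟩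
  -- supports in `P₁`
  set S : J → Set P₁ := fun j => {u : P₁ | x j (Sum.inl u) ≠ 0} with hSdef
  -- each support is σ-compact
  have hSsigma : ∀ j, IsSigmaCompact (S j) := by
    intro j
    have hrepr : S j = ⋃ n : ℕ,
        Sum.inl ⁻¹' {s : P₁ ⊕ P₂ | ((n : ℝ) + 1)⁻¹ ≤ ‖x j s‖} := by
      ext u
      simp only [hSdef, mem_iUnion, mem_preimage, mem_setOf_eq]
      constructor
      · intro hu
        have h0 : 0 < ‖x j (Sum.inl u)‖ := norm_pos_iff.mpr hu
        obtain ⟨n, hn⟩ := exists_nat_gt (‖x j (Sum.inl u)‖)⁻¹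
        refine ⟨n, le_of_lt ?_⟩
        have hn' : (‖x j (Sum.inl u)‖)⁻¹ < (n : ℝ) + 1 := hn.trans (by linarith)
        exact inv_lt_of_inv_lt₀ h0 hn'
      · rintro ⟨n, hn⟩
        have : (0 : ℝ) < ‖x j (Sum.inl u)‖ := lt_of_lt_of_le (by positivity) hn
        exact norm_pos_iff.mp this
    rw [hrepr]
    refine isSigmaCompact_iUnion _ fun n => ?_
    refine IsCompact.isSigmaCompact ?_
    have hball : Metric.ball (0 : ℂ) (((n : ℝ) + 1)⁻¹) ∈ 𝓝 (0 : ℂ) :=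
      Metric.ball_mem_nhds _ (by positivity)
    obtain ⟨C, hC, hsub⟩ := mem_cocompact.mp ((x j).zero_at_infty' hball)
    have hclosed : IsClosed {s : P₁ ⊕ P₂ | ((n : ℝ) + 1)⁻¹ ≤ ‖x j s‖} :=
      isClosed_le continuous_const ((x j).continuous.norm)
    have hKsub : {s : P₁ ⊕ P₂ | ((n : ℝ) + 1)⁻¹ ≤ ‖x j s‖} ⊆ C := by
      intro s hs
      by_contra hsC
      have := hsub hsC
      simp only [mem_preimage, Metric.mem_ball, dist_zero_right] at this
      exact absurd hs (not_le.mpr this)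
    have hKcomp : IsCompact {s : P₁ ⊕ P₂ | ((n : ℝ) + 1)⁻¹ ≤ ‖x j s‖} :=
      hC.of_isClosed_subset hclosed hKsub
    exact Topology.IsEmbedding.inl.isInducing.isCompact_preimage isClosed_range_inl hKcomp
  -- the set of indices active at a point, countable
  set Jt : P₁ → Set J := fun u => {j : J | x j (Sum.inl u) ≠ 0} with hJtdef
  have hJtc : ∀ u, (Jt u).Countable := by
    intro u
    have hs := (hfr (Sum.inl u)).1
    refine Set.Countable.mono ?_ hs.countable_support
    intro j hj
    simp only [hJtdef, mem_setOf_eq] at hj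
    simp only [Function.mem_support]
    exact pow_ne_zero 2 (norm_ne_zero_iff.mpr hj)
  -- for any countable set of indices, we can find a point where they all vanish
  have pick : ∀ s : Set J, s.Countable → ∃ u : P₁, ∀ j ∈ s, x j (Sum.inl u) = 0 := by
    intro s hsc
    have hB : IsSigmaCompact (⋃ j ∈ s, S j) :=
      isSigmaCompact_biUnion hsc fun j _ => hSsigma j
    have hcl : IsCompact (closure (⋃ j ∈ s, S j)) := hIV _ hB
    have hne : ∃ u : P₁, u ∉ closure (⋃ j ∈ s, S j) := by
      by_contra h
      push_neg at h
      exact hnc ⟨by rw [← Set.eq_univ_of_forall h]; exact hcl⟩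
    obtain ⟨u, hu⟩ := hne
    refine ⟨u, fun j hj => ?_⟩
    by_contra hxu
    exact hu (subset_closure (Set.mem_biUnion hj hxu))
  choose pt hpt using pick
  -- the recursively defined sequence of points
  set st : ℕ → {s : Set J // s.Countable} := fun n =>
    Nat.rec ⟨∅, countable_empty⟩
      (fun _ p => ⟨p.1 ∪ Jt (pt p.1 p.2), p.2.union (hJtc _)⟩) n with hstdef
  set t : ℕ → P₁ := fun n => pt (st n).1 (st n).2 with htdef
  have hvan : ∀ n, ∀ j ∈ (st n).1, x j (Sum.inl (t n)) = 0 := fun n => hpt _ _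
  have hstep : ∀ n, (st (n + 1)).1 = (st n).1 ∪ Jt (t n) := fun n => rfl
  have hmono : ∀ n m, n ≤ m → (st n).1 ⊆ (st m).1 := by
    intro n m hnm
    induction m, hnm using Nat.le_induction with
    | base => exact subset_rfl
    | succ m hnm ih => rw [hstep m]; exact ih.trans subset_union_left
  have hJsub : ∀ n m, n < m → Jt (t n) ⊆ (st m).1 := by
    intro n m hnm
    refine subset_trans ?_ (hmono (n + 1) m hnm)
    rw [hstep n]
    exact subset_union_right
  have hdisj : ∀ n m, n < m → ∀ j, j ∈ Jt (t n) → j ∉ Jt (t m) := by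
    intro n m hnm j hj hj'
    exact hj' (hvan m j (hJsub n m hnm hj))
  -- a cluster point of the sequence
  have hrange : IsSigmaCompact (Set.range t) := by
    have : Set.range t = ⋃ n : ℕ, {t n} := by
      ext u; simp [Set.mem_range, eq_comm]
    rw [this]
    exact isSigmaCompact_iUnion _ fun n => isCompact_singleton.isSigmaCompact
  have hclcomp : IsCompact (closure (Set.range t)) := hIV _ hrange
  have hle : Filter.map t atTop ≤ 𝓟 (closure (Set.range t)) :=
    le_principal_iff.mpr (Filter.mem_map.mpr
      (Filter.univ_mem' fun n => subset_closure (Set.mem_range_self n)))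
  obtain ⟨w, -, hw⟩ := hclcomp.exists_clusterPt hle
  -- a finite subfamily with large sum at `w`
  have hsw := (hfr (Sum.inl w)).1
  have hlow := (hfr (Sum.inl w)).2.1
  obtain ⟨F, hF⟩ : ∃ F : Finset J, c₁ / 2 < ∑ j ∈ F, ‖x j (Sum.inl w)‖ ^ 2 := by
    have hlt : c₁ / 2 < ∑' j, ‖x j (Sum.inl w)‖ ^ 2 := lt_of_lt_of_le (by linarith) hlow
    exact (hsw.hasSum.eventually (eventually_gt_nhds hlt)).exists
  -- this finite subfamily has large sum on a neighbourhood of `w`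
  have hGcont : Continuous fun u : P₁ => ∑ j ∈ F, ‖x j (Sum.inl u)‖ ^ 2 :=
    continuous_finset_sum F fun j _ =>
      (((x j).continuous.comp continuous_inl).norm.pow 2)
  have hnhds : {u : P₁ | c₁ / 2 < ∑ j ∈ F, ‖x j (Sum.inl u)‖ ^ 2} ∈ 𝓝 w :=
    (isOpen_lt continuous_const hGcont).mem_nhds hF
  have hfreq : ∃ᶠ n in atTop, c₁ / 2 < ∑ j ∈ F, ‖x j (Sum.inl (t n))‖ ^ 2 :=
    (mapClusterPt_iff_frequently.mp hw) _ hnhds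
  have hfreq2 : ∃ᶠ n in atTop, ∃ j ∈ F, j ∈ Jt (t n) := by
    refine hfreq.mono fun n hn => ?_
    by_contra h
    push_neg at h
    have hzero : ∑ j ∈ F, ‖x j (Sum.inl (t n))‖ ^ 2 = 0 := by
      refine Finset.sum_eq_zero fun j hj => ?_
      have hj0 : x j (Sum.inl (t n)) = 0 := by
        have := h j hj
        simpa [hJtdef] using this
      simp [hj0]
    rw [hzero] at hn
    linarith
  have hinf : {n : ℕ | ∃ j ∈ F, j ∈ Jt (t n)}.Infinite :=
    Nat.frequently_atTop_iff_infinite.mp hfreq2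
  -- but only finitely many `n` can meet `F`, since the `Jt (t n)` are pairwise disjoint
  have hfin : {n : ℕ | ∃ j ∈ F, j ∈ Jt (t n)}.Finite := by
    set P : Set ℕ := {n : ℕ | ∃ j ∈ F, j ∈ Jt (t n)} with hPdef
    have hforall : ∀ n : {n : ℕ // n ∈ P}, ∃ j, j ∈ F ∧ j ∈ Jt (t n.1) := fun n => n.2
    choose φ hφF hφJ using hforall
    have hinj : Function.Injective φ := by
      rintro ⟨n, hn⟩ ⟨m, hm⟩ h
      by_contra hne
      have hne' : n ≠ m := fun hnm => hne (by simp [hnm])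
      rcases lt_or_gt_of_ne hne' with h1 | h1
      · exact hdisj n m h1 _ (hφJ ⟨n, hn⟩) (h ▸ hφJ ⟨m, hm⟩)
      · exact hdisj m n h1 _ (hφJ ⟨m, hm⟩) (h ▸ hφJ ⟨n, hn⟩)
    have : Finite {n : ℕ // n ∈ P} := by
      have : Finite {j : J // j ∈ F} := by
        have : Fintype {j : J // j ∈ F} := FinsetCoe.fintype F
        exact Finite.of_fintype _
      exact Finite.of_injective (fun n => (⟨φ n, hφF n⟩ : {j : J // j ∈ F}))
        fun a b hab => hinj (by simpa using hab)
    exact Set.toFinite P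
  exact hinf hfin
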